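/- In the two-player complex-environment game with common weight g ∈ (0,1) and d₁ > d₂ + 2gk, the interior equilibrium (p₁*, p₂*) satisfies E(X(p₁*)) = (d₁ + g·d₂)/(1−g²) + k/(1+g) and E(X(p₂*)) = (d₂ + g·d₁)/(1−g²) + (1+2g)k/(1+g), so the equilibrium distance is E(X(p₁*)) − E(X(p₂*)) = (d₁ − d₂)/(1+g) − 2gk/(1+g). -/
import Mathlib

/-- Two-player complex-environment game: interior equilibrium outcomes and distance. -/
theorem two_player_complex_equilibrium (g k μ X₀ p₀ d₁ d₂ p₁ p₂ : ℝ)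
    (hg0 : 0 < g) (hg1 : g < 1) (hμ : μ < 0) (hk : 0 < k)
    (hd : d₂ + 2 * g * k < d₁)
    (E : ℝ → ℝ) (hE : ∀ p, E p = X₀ + μ * (p - p₀))
    (h1 : E p₁ = d₁ + g * E p₂ + k - 2 * g * k)
    (h2 : E p₂ = d₂ + g * E p₁ + k) :
    E p₁ = (d₁ + g * d₂) / (1 - g ^ 2) + k / (1 + g) ∧
    E p₂ = (d₂ + g * d₁) / (1 - g ^ 2) + (1 + 2 * g) * k / (1 + g) ∧
    E p₁ - E p₂ = (d₁ - d₂) / (1 + g) - 2 * g * k / (1 + g) := by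
  have h1g : (1 : ℝ) - g ^ 2 ≠ 0 := by nlinarith
  have h1g' : (1 : ℝ) + g ≠ 0 := by nlinarith
  refine ⟨?_, ?_, ?_⟩ <;> field_simp <;> nlinarith [h1, h2]
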